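/- With Leontief utilities, let P* = (p*_1, …, p*_n) be a profile and q a distribution such that every agent's peak places 0 on every alternative that is not critical for her under q (i.e., for all agents i and alternatives j, j ∉ T_{q,i} implies p*_{i,j} = 0). If q satisfies weak core fair share at P*, then q maximizes the Nash product at P*. -/

import Mathlib

/-- Leontief utility of an agent with peak `p` at distribution `q`:
the minimum of `q j / p j` over alternatives `j` with `p j > 0`. -/
noncomputable def leontief {m : ℕ} (p q : Fin m → ℝ) : ℝ :=
  sInf {x : ℝ | ∃ j, 0 < p j ∧ x = q j / p j}

/-- `q` satisfies core fair share at profile `P` (with Leontief utilities). -/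
def CoreFairShare {m n : ℕ} (P : Fin n → Fin m → ℝ) (q : Fin m → ℝ) : Prop :=
  ¬ ∃ (N' : Finset (Fin n)) (q' : Fin m → ℝ), N'.Nonempty ∧
      q' ∈ stdSimplex ℝ (Fin m) ∧
      ∀ q'' ∈ stdSimplex ℝ (Fin m),
        (∀ i ∈ N', leontief (P i) q ≤
          leontief (P i) (((N'.card : ℝ) / (n : ℝ)) • q' +
            (1 - (N'.card : ℝ) / (n : ℝ)) • q'')) ∧
        (∃ i ∈ N', leontief (P i) q <
          leontief (P i) (((N'.card : ℝ) / (n : ℝ)) • q' +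
            (1 - (N'.card : ℝ) / (n : ℝ)) • q''))

/-- `q` satisfies weak core fair share at profile `P` (with Leontief utilities). -/
def WeakCoreFairShare {m n : ℕ} (P : Fin n → Fin m → ℝ) (q : Fin m → ℝ) : Prop :=
  ¬ ∃ (N' : Finset (Fin n)) (q' : Fin m → ℝ), N'.Nonempty ∧
      q' ∈ stdSimplex ℝ (Fin m) ∧
      ∀ q'' ∈ stdSimplex ℝ (Fin m), ∀ i ∈ N',
        leontief (P i) q <
          leontief (P i) (((N'.card : ℝ) / (n : ℝ)) • q' +
            (1 - (N'.card : ℝ) / (n : ℝ)) • q'')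

-- The set of critical alternatives of an agent with peak `p` under distribution `q`:
-- the alternatives attaining the minimum of `q j / p j` over `j` with `p j > 0`.
open Classical in
noncomputable def criticalSet {m : ℕ} (p q : Fin m → ℝ) : Finset (Fin m) :=
  Finset.univ.filter (fun j => 0 < p j ∧ ∀ k, 0 < p k → q j / p j ≤ q k / p k)

/-- `q` maximizes the Nash product of Leontief utilities at profile `P`. -/
def NashMax {m n : ℕ} (P : Fin n → Fin m → ℝ) (q : Fin m → ℝ) : Prop :=
  q ∈ stdSimplex ℝ (Fin m) ∧
    ∀ q' ∈ stdSimplex ℝ (Fin m), ∏ i, leontief (P i) q' ≤ ∏ i, leontief (P i) q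

section Helpers

lemma leontief_set_finite {m : ℕ} (p q : Fin m → ℝ) :
    {x : ℝ | ∃ j, 0 < p j ∧ x = q j / p j}.Finite :=
  (Set.finite_range fun j => q j / p j).subset (by rintro x ⟨j, hj, rfl⟩; exact ⟨j, rfl⟩)

lemma leontief_le {m : ℕ} (p q : Fin m → ℝ) {j : Fin m} (hj : 0 < p j) :
    leontief p q ≤ q j / p j :=
  csInf_le (leontief_set_finite p q).bddBelow ⟨j, hj, rfl⟩

lemma le_leontief {m : ℕ} (p q : Fin m → ℝ) {c : ℝ} (hp : ∃ j, 0 < p j)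
    (h : ∀ j, 0 < p j → c ≤ q j / p j) : c ≤ leontief p q := by
  obtain ⟨j, hj⟩ := hp
  exact le_csInf ⟨q j / p j, j, hj, rfl⟩ (by rintro x ⟨k, hk, rfl⟩; exact h k hk)

lemma leontief_nonneg {m : ℕ} (p q : Fin m → ℝ) (hp : ∃ j, 0 < p j)
    (hq : ∀ j, 0 ≤ q j) : 0 ≤ leontief p q :=
  le_leontief p q hp fun j hj => div_nonneg (hq j) hj.le

open MeasureTheory in
lemma layer_cake_sum {ι κ : Type*} [Fintype ι] [Fintype κ]
    (ρ : ι → ℝ) (x : κ → ℝ) (w : κ → ℝ)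
    (hρ : ∀ i, 0 ≤ ρ i) (hx : ∀ j, 0 ≤ x j) (hw : ∀ j, 0 ≤ w j)
    (H : ∀ t : ℝ, 0 ≤ t →
      ((Finset.univ.filter fun i => t < ρ i).card : ℝ) ≤
        ∑ j ∈ Finset.univ.filter (fun j => t < x j), w j) :
    ∑ i, ρ i ≤ ∑ j, w j * x j := by
  have hfint : ∀ i : ι,
      Integrable ((Set.Ico (0:ℝ) (ρ i)).indicator fun _ => (1:ℝ)) := fun i =>
    (integrable_indicator_iff measurableSet_Ico).2
      (integrableOn_const measure_Ico_lt_top.ne)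
  have hgint : ∀ j : κ,
      Integrable ((Set.Ico (0:ℝ) (x j)).indicator fun _ => w j) := fun j =>
    (integrable_indicator_iff measurableSet_Ico).2
      (integrableOn_const measure_Ico_lt_top.ne)
  have key : ∫ t, (∑ i, (Set.Ico (0:ℝ) (ρ i)).indicator (fun _ => (1:ℝ)) t)
      ≤ ∫ t, (∑ j, (Set.Ico (0:ℝ) (x j)).indicator (fun _ => w j) t) := by
    apply integral_mono (integrable_finset_sum _ fun i _ => hfint i)
      (integrable_finset_sum _ fun j _ => hgint j)
    intro t
    dsimp only
    by_cases ht : 0 ≤ t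
    · have hL : ∑ i, (Set.Ico (0:ℝ) (ρ i)).indicator (fun _ => (1:ℝ)) t
          = ((Finset.univ.filter fun i => t < ρ i).card : ℝ) := by
        simp only [Set.indicator_apply, Set.mem_Ico, ht, true_and]
        rw [Finset.sum_ite, Finset.sum_const, Finset.sum_const]
        simp
      have hR : ∑ j, (Set.Ico (0:ℝ) (x j)).indicator (fun _ => w j) t
          = ∑ j ∈ Finset.univ.filter (fun j => t < x j), w j := by
        simp only [Set.indicator_apply, Set.mem_Ico, ht, true_and]
        rw [Finset.sum_filter]
      rw [hL, hR]; exact H t ht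
    · have hL : ∀ i, (Set.Ico (0:ℝ) (ρ i)).indicator (fun _ => (1:ℝ)) t = 0 := by
        intro i; apply Set.indicator_of_notMem; simp [Set.mem_Ico]; intro h; exact absurd h ht
      have hR : ∀ j, (Set.Ico (0:ℝ) (x j)).indicator (fun _ => w j) t = 0 := by
        intro j; apply Set.indicator_of_notMem; simp [Set.mem_Ico]; intro h; exact absurd h ht
      simp [hL, hR]
  rw [integral_finset_sum _ fun i _ => hfint i, integral_finset_sum _ fun j _ => hgint j] at key
  have e1 : ∀ i : ι, ∫ t, (Set.Ico (0:ℝ) (ρ i)).indicator (fun _ => (1:ℝ)) t = ρ i := by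
    intro i
    rw [integral_indicator_const _ measurableSet_Ico, Real.volume_real_Ico, sub_zero,
      max_eq_left (hρ i), smul_eq_mul, mul_one]
  have e2 : ∀ j : κ, ∫ t, (Set.Ico (0:ℝ) (x j)).indicator (fun _ => w j) t = w j * x j := by
    intro j
    rw [integral_indicator_const _ measurableSet_Ico, Real.volume_real_Ico, sub_zero,
      max_eq_left (hx j), smul_eq_mul, mul_comm]
  simp only [e1, e2] at key
  exact key

end Helpers

/-- with Leontief utilities, if at profile `P*` every agent's peak places
`0` on every alternative that is not critical for her under `q`, and `q` satisfies weak
core fair share at `P*`, then `q` maximizes the Nash product at `P*`. -/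
theorem weak_cfs_on_critical_profile_implies_nash_max {m n : ℕ}
    (Pstar : Fin n → Fin m → ℝ) (hPstar : ∀ i, Pstar i ∈ stdSimplex ℝ (Fin m))
    (q : Fin m → ℝ) (hq : q ∈ stdSimplex ℝ (Fin m))
    (hcrit : ∀ i j, j ∉ criticalSet (Pstar i) q → Pstar i j = 0)
    (hwcfs : WeakCoreFairShare Pstar q) :
    NashMax Pstar q := by
  classical
  refine ⟨hq, ?_⟩
  by_contra hcon
  push_neg at hcon
  obtain ⟨q', hq's, hlt⟩ := hcon
  -- every peak has a positive coordinate
  have hsupp : ∀ i, ∃ j, 0 < Pstar i j := by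
    intro i
    by_contra h
    push_neg at h
    have h0 : ∑ j, Pstar i j = 0 :=
      Finset.sum_eq_zero fun j _ => le_antisymm (h j) ((hPstar i).1 j)
    rw [(hPstar i).2] at h0
    norm_num at h0
  set u : Fin n → ℝ := fun i => leontief (Pstar i) q with hudef
  have hu0 : ∀ i, 0 ≤ u i := fun i => leontief_nonneg _ _ (hsupp i) hq.1
  -- structural fact: q j = u i * Pstar i j on the support of agent i
  have hqu : ∀ i j, 0 < Pstar i j → q j = u i * Pstar i j := by
    intro i j hj
    have hjcrit : j ∈ criticalSet (Pstar i) q := by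
      by_contra h; exact absurd (hcrit i j h) (ne_of_gt hj)
    rw [criticalSet, Finset.mem_filter] at hjcrit
    obtain ⟨-, hj', hmin⟩ := hjcrit
    have heq : u i = q j / Pstar i j :=
      le_antisymm (leontief_le _ _ hj) (le_leontief _ _ (hsupp i) fun k hk => hmin k hk)
    rw [heq, div_mul_cancel₀ _ (ne_of_gt hj)]
  rcases Nat.eq_zero_or_pos n with hn | hn
  · subst hn; simp at hlt
  have hn' : (0:ℝ) < n := by exact_mod_cast hn
  -- blocking helper
  have hblock : ∀ (N' : Finset (Fin n)) (qd : Fin m → ℝ), N'.Nonempty →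
      qd ∈ stdSimplex ℝ (Fin m) →
      (∀ i ∈ N', u i < ((N'.card : ℝ) / n) * leontief (Pstar i) qd) → False := by
    intro N' qd hNe hqd hlt'
    apply hwcfs
    refine ⟨N', qd, hNe, hqd, ?_⟩
    intro q'' hq'' i hi
    refine lt_of_lt_of_le (hlt' i hi) ?_
    apply le_leontief _ _ (hsupp i)
    intro j hj
    have hr0 : (0:ℝ) ≤ (N'.card : ℝ) / n := by positivity
    have hr1 : (N'.card : ℝ) / n ≤ 1 := by
      rw [div_le_one hn']
      have := Finset.card_le_univ N'
      rw [Fintype.card_fin] at this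
      exact_mod_cast this
    have hcombo : (((N'.card : ℝ) / n) • qd + (1 - (N'.card : ℝ) / n) • q'') j
        = ((N'.card : ℝ) / n) * qd j + (1 - (N'.card : ℝ) / n) * q'' j := rfl
    rw [hcombo]
    calc ((N'.card : ℝ) / n) * leontief (Pstar i) qd
        ≤ ((N'.card : ℝ) / n) * (qd j / Pstar i j) :=
          mul_le_mul_of_nonneg_left (leontief_le _ _ hj) hr0
      _ = (((N'.card : ℝ) / n) * qd j) / Pstar i j := by rw [mul_div_assoc]
      _ ≤ (((N'.card : ℝ) / n) * qd j + (1 - (N'.card : ℝ) / n) * q'' j) / Pstar i j := by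
          apply (div_le_div_iff_of_pos_right hj).2
          exact le_add_of_nonneg_right (mul_nonneg (by linarith) (hq''.1 j))
  by_cases hupos : ∀ i, 0 < u i
  swap
  · -- some agent has utility 0
    push_neg at hupos
    obtain ⟨i0, hi0⟩ := hupos
    have hu0i : u i0 = 0 := le_antisymm hi0 (hu0 i0)
    have hprod0 : ∏ i, u i = 0 := Finset.prod_eq_zero (Finset.mem_univ i0) hu0i
    have hq'pos : 0 < leontief (Pstar i0) q' := by
      rcases (leontief_nonneg (Pstar i0) q' (hsupp i0) hq's.1).lt_or_eq with h | h
      · exact h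
      · exfalso
        have hz : ∏ i, leontief (Pstar i) q' = 0 :=
          Finset.prod_eq_zero (Finset.mem_univ i0) h.symm
        rw [hprod0, hz] at hlt
        exact lt_irrefl 0 hlt
    apply hblock {i0} q' (Finset.singleton_nonempty i0) hq's
    intro i hi
    rw [Finset.mem_singleton] at hi
    subst hi
    rw [hu0i, Finset.card_singleton, Nat.cast_one]
    exact mul_pos (by positivity) hq'pos
  -- all utilities positive
  have hprodpos : 0 < ∏ i, u i := Finset.prod_pos fun i _ => hupos i
  set ρ : Fin n → ℝ := fun i => leontief (Pstar i) q' / u i with hρdef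
  set x : Fin m → ℝ := fun j => q' j / q j with hxdef
  have hρ0 : ∀ i, 0 ≤ ρ i := fun i =>
    div_nonneg (leontief_nonneg _ _ (hsupp i) hq's.1) (hu0 i)
  have hx0 : ∀ j, 0 ≤ x j := fun j => div_nonneg (hq's.1 j) (hq.1 j)
  have hC1 : ∀ i j, 0 < Pstar i j → ρ i ≤ x j := by
    intro i j hj
    have hxj : x j = (q' j / Pstar i j) / u i := by
      show q' j / q j = _
      rw [hqu i j hj, div_div, mul_comm]
    rw [hxj]
    exact (div_le_div_iff_of_pos_right (hupos i)).2 (leontief_le _ _ hj)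
  have hC2 : ∀ S : Finset (Fin n), S.Nonempty →
      (S.card : ℝ) / n ≤
        ∑ j ∈ S.biUnion (fun i => Finset.univ.filter fun j => 0 < Pstar i j), q j := by
    intro S hS
    by_contra hcon2
    push_neg at hcon2
    set U := S.biUnion (fun i => Finset.univ.filter fun j => 0 < Pstar i j) with hU
    set QS := ∑ j ∈ U, q j with hQS
    have hQSpos : 0 < QS := by
      obtain ⟨i, hi⟩ := hS
      obtain ⟨j, hj⟩ := hsupp i
      have hjU : j ∈ U :=
        Finset.mem_biUnion.2 ⟨i, hi, Finset.mem_filter.2 ⟨Finset.mem_univ j, hj⟩⟩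
      have hqj : 0 < q j := by rw [hqu i j hj]; exact mul_pos (hupos i) hj
      exact Finset.sum_pos' (fun k _ => hq.1 k) ⟨j, hjU, hqj⟩
    set qs : Fin m → ℝ := fun j => if j ∈ U then q j / QS else 0 with hqs
    have hqssimplex : qs ∈ stdSimplex ℝ (Fin m) := by
      constructor
      · intro j
        show (0:ℝ) ≤ if j ∈ U then q j / QS else 0
        split
        · exact div_nonneg (hq.1 j) hQSpos.le
        · exact le_refl 0
      · show ∑ j, (if j ∈ U then q j / QS else 0) = 1
        rw [Finset.sum_ite_mem, Finset.univ_inter, ← Finset.sum_div, ← hQS,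
          div_self hQSpos.ne']
    have hval : ∀ i ∈ S, ∀ j, 0 < Pstar i j → qs j / Pstar i j = u i / QS := by
      intro i hi j hj
      have hjU : j ∈ U :=
        Finset.mem_biUnion.2 ⟨i, hi, Finset.mem_filter.2 ⟨Finset.mem_univ j, hj⟩⟩
      show (if j ∈ U then q j / QS else 0) / Pstar i j = u i / QS
      rw [if_pos hjU, hqu i j hj]
      have hp : Pstar i j ≠ 0 := ne_of_gt hj
      have hQ : QS ≠ 0 := hQSpos.ne'
      field_simp
    have hle : ∀ i ∈ S, leontief (Pstar i) qs = u i / QS := by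
      intro i hi
      obtain ⟨j0, hj0⟩ := hsupp i
      refine le_antisymm ?_ (le_leontief _ _ (hsupp i) fun j hj => (hval i hi j hj).ge)
      calc leontief (Pstar i) qs ≤ qs j0 / Pstar i j0 := leontief_le _ _ hj0
        _ = u i / QS := hval i hi j0 hj0
    apply hblock S qs hS hqssimplex
    intro i hi
    rw [hle i hi]
    have h1 : 1 < (S.card : ℝ) / n / QS := (one_lt_div hQSpos).2 hcon2
    calc u i = 1 * u i := (one_mul _).symm
      _ < ((S.card : ℝ) / n / QS) * u i := mul_lt_mul_of_pos_right h1 (hupos i)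
      _ = (S.card : ℝ) / n * (u i / QS) := by ring
  have hsum : ∑ i, ρ i ≤ ∑ j, ((n:ℝ) * q j) * x j := by
    apply layer_cake_sum ρ x (fun j => (n:ℝ) * q j) hρ0 hx0
      (fun j => mul_nonneg hn'.le (hq.1 j))
    intro t ht
    rcases (Finset.univ.filter fun i => t < ρ i).eq_empty_or_nonempty with he | hne
    · rw [he]
      simp only [Finset.card_empty, Nat.cast_zero]
      exact Finset.sum_nonneg fun j _ => mul_nonneg hn'.le (hq.1 j)
    · set S := Finset.univ.filter fun i => t < ρ i with hSdef
      have h2 := hC2 S hne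
      have hsub : S.biUnion (fun i => Finset.univ.filter fun j => 0 < Pstar i j)
          ⊆ Finset.univ.filter (fun j => t < x j) := by
        intro j hj
        obtain ⟨i, hiS, hjf⟩ := Finset.mem_biUnion.1 hj
        have hp := (Finset.mem_filter.1 hjf).2
        have hti := (Finset.mem_filter.1 hiS).2
        exact Finset.mem_filter.2 ⟨Finset.mem_univ j, lt_of_lt_of_le hti (hC1 i j hp)⟩
      have h3 := Finset.sum_le_sum_of_subset_of_nonneg hsub (fun j _ _ => hq.1 j)
      have h4 : (S.card : ℝ) / n ≤ ∑ j ∈ Finset.univ.filter (fun j => t < x j), q j :=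
        h2.trans h3
      rw [div_le_iff₀ hn'] at h4
      calc (S.card : ℝ) ≤ (∑ j ∈ Finset.univ.filter (fun j => t < x j), q j) * n := h4
        _ = ∑ j ∈ Finset.univ.filter (fun j => t < x j), (n:ℝ) * q j := by
            rw [Finset.sum_mul]; exact Finset.sum_congr rfl fun j _ => by ring
  have hsum2 : ∑ j, ((n:ℝ) * q j) * x j ≤ n := by
    have hterm : ∀ j, ((n:ℝ) * q j) * x j ≤ (n:ℝ) * q' j := by
      intro j
      rcases eq_or_lt_of_le (hq.1 j) with h0 | h0
      · rw [← h0, mul_zero, zero_mul]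
        exact mul_nonneg hn'.le (hq's.1 j)
      · show (n:ℝ) * q j * (q' j / q j) ≤ (n:ℝ) * q' j
        rw [mul_assoc, mul_comm (q j), div_mul_cancel₀ _ h0.ne']
    calc ∑ j, ((n:ℝ) * q j) * x j ≤ ∑ j, (n:ℝ) * q' j := Finset.sum_le_sum fun j _ => hterm j
      _ = (n:ℝ) * ∑ j, q' j := by rw [Finset.mul_sum]
      _ = n := by rw [hq's.2, mul_one]
  have hρsum : ∑ i, ρ i ≤ n := hsum.trans hsum2
  -- AM-GM contradiction
  have hw1 : ∑ _i : Fin n, (1/(n:ℝ)) = 1 := by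
    rw [Finset.sum_const, Finset.card_univ, Fintype.card_fin, nsmul_eq_mul]
    field_simp
  have hgm := Real.geom_mean_le_arith_mean_weighted Finset.univ (fun _ => 1/(n:ℝ)) ρ
    (fun i _ => by positivity) hw1 (fun i _ => hρ0 i)
  have harith : ∑ i, (1/(n:ℝ)) * ρ i ≤ 1 := by
    have : ∑ i, (1/(n:ℝ)) * ρ i = (∑ i, ρ i) / n := by
      rw [Finset.sum_div]; exact Finset.sum_congr rfl fun i _ => by ring
    rw [this, div_le_one hn']
    exact hρsum
  have hprod_le : ∏ i, ρ i ≤ 1 := by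
    by_contra hgt
    push_neg at hgt
    have hlt1 : 1 < ∏ i, ρ i ^ (1/(n:ℝ)) := by
      rw [Real.finset_prod_rpow _ _ (fun i _ => hρ0 i)]
      exact (Real.one_lt_rpow_iff_of_pos (lt_trans one_pos hgt)).2
        (Or.inl ⟨hgt, by positivity⟩)
    linarith [hgm.trans harith]
  rw [hρdef] at hprod_le
  have : (∏ i, leontief (Pstar i) q') / ∏ i, u i ≤ 1 := by
    rw [← Finset.prod_div_distrib]; exact hprod_le
  rw [div_le_one hprodpos] at this
  exact absurd hlt (not_lt.2 this)
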